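/- The type-A Narayana polynomial Cat(S_{n+1}, x) = \sum_{i=0}^{n} \frac{1}{i+1} \binom{n}{i} \binom{n+1}{i} x^i is gamma-positive: Cat(S_{n+1}, x) = \sum_{i=0}^{\lfloor n/2 \rfloor} \gamma_i x^i (1+x)^{n-2i} with \gamma_i = \frac{1}{i+1} \binom{n}{i, i, n-2i} (the multinomial coefficient n!/(i! i! (n-2i)!) divided by i+1). -/

import Mathlib

open Polynomial Finset

private lemma factR_ne (m : ℕ) : (m.factorial : ℝ) ≠ 0 :=
  Nat.cast_ne_zero.mpr m.factorial_ne_zero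

private lemma vandN (m p k : ℕ) :
    ∑ i ∈ Finset.range (k+1), m.choose i * p.choose (k - i) = (m+p).choose k := by
  rw [Nat.add_choose_eq, Finset.Nat.sum_antidiagonal_eq_sum_range_succ_mk]

private lemma coeff_term (g : ℝ) (i m k : ℕ) :
    (Polynomial.C g * Polynomial.X ^ i * (1 + Polynomial.X) ^ m).coeff k =
      if i ≤ k then g * (m.choose (k - i) : ℝ) else 0 := by
  rw [mul_right_comm, Polynomial.coeff_mul_X_pow']
  split_ifs with h
  · rw [Polynomial.coeff_C_mul, Polynomial.coeff_one_add_X_pow]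
  · rfl

private lemma core (a b c : ℕ) :
    ((2*a+2+b+c).factorial : ℝ) /
        (((a+1).factorial : ℝ) * ((a+1).factorial : ℝ) * ((b+c).factorial : ℝ) *
          (((a:ℝ)+1) + 1)) * (((b+c).choose b : ℕ) : ℝ)
    = (((2*a+2+b+c).choose (a+b+1) : ℕ) : ℝ) * (((a+c+1).choose (a+1) : ℕ) : ℝ) *
        (((a+b+1).choose (a+1) : ℕ) : ℝ)
      - (((2*a+2+b+c).choose (a+b) : ℕ) : ℝ) * (((a+c+2).choose (a+2) : ℕ) : ℝ) *
        (((a+b).choose a : ℕ) : ℝ) := by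
  rw [Nat.cast_choose ℝ (show b ≤ b+c by omega),
      Nat.cast_choose ℝ (show a+b+1 ≤ 2*a+2+b+c by omega),
      Nat.cast_choose ℝ (show a+1 ≤ a+c+1 by omega),
      Nat.cast_choose ℝ (show a+1 ≤ a+b+1 by omega),
      Nat.cast_choose ℝ (show a+b ≤ 2*a+2+b+c by omega),
      Nat.cast_choose ℝ (show a+2 ≤ a+c+2 by omega),
      Nat.cast_choose ℝ (show a ≤ a+b by omega),
      show b+c-b = c from by omega,
      show 2*a+2+b+c - (a+b+1) = a+c+1 from by omega,
      show a+c+1 - (a+1) = c from by omega,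
      show a+b+1 - (a+1) = b from by omega,
      show 2*a+2+b+c - (a+b) = a+c+2 from by omega,
      show a+c+2 - (a+2) = c from by omega,
      show a+b-a = b from by omega,
      show (a+b+1).factorial = (a+b+1) * (a+b).factorial from Nat.factorial_succ _,
      show (a+c+2).factorial = (a+c+2) * (a+c+1).factorial from Nat.factorial_succ _,
      show (a+2).factorial = (a+2) * ((a+1) * a.factorial) from by
        rw [Nat.factorial_succ, Nat.factorial_succ],
      show (a+1).factorial = (a+1) * a.factorial from Nat.factorial_succ _]
  have h1 := factR_ne a
  have h2 := factR_ne b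
  have h3 := factR_ne c
  have h4 := factR_ne (a+b)
  have h5 := factR_ne (a+c+1)
  have h6 := factR_ne (b+c)
  push_cast
  field_simp
  ring

private lemma term_eq (n k a : ℕ) (hk : 1 ≤ k) (hkn : k ≤ n) (h2 : 2*(a+1) ≤ n) :
    (if a+1 ≤ k then
        (n.factorial : ℝ) / (((a+1).factorial : ℝ) * ((a+1).factorial : ℝ) *
            ((n - 2*(a+1)).factorial : ℝ) * (((a:ℝ)+1) + 1)) *
          ((n - 2*(a+1)).choose (k - (a+1)) : ℝ)
      else 0)
    = (n.choose k : ℝ) * ((n-k).choose (a+1) : ℝ) * (k.choose (a+1) : ℝ)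
      - (n.choose (k-1) : ℝ) * ((n-k+1).choose (a+2) : ℝ) * ((k-1).choose a : ℝ) := by
  by_cases hik : a+1 ≤ k
  · rw [if_pos hik]
    by_cases h : k + (a+1) ≤ n
    · obtain ⟨b, rfl⟩ : ∃ b, k = a+1+b := ⟨k-(a+1), by omega⟩
      obtain ⟨c, rfl⟩ : ∃ c, n = 2*a+2+b+c := ⟨n-(a+1+b)-(a+1), by omega⟩
      rw [show 2*a+2+b+c - 2*(a+1) = b+c from by omega,
          show a+1+b - (a+1) = b from by omega,
          show 2*a+2+b+c - (a+1+b) = a+c+1 from by omega,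
          show a+1+b = a+b+1 from by omega,
          show a+b+1-1 = a+b from by omega,
          show a+c+1+1 = a+c+2 from by omega]
      exact core a b c
    · rw [Nat.choose_eq_zero_of_lt (show n - 2*(a+1) < k - (a+1) from by omega),
          Nat.choose_eq_zero_of_lt (show n - k < a+1 from by omega),
          Nat.choose_eq_zero_of_lt (show n - k + 1 < a+2 from by omega)]
      simp
  · rw [if_neg hik,
        Nat.choose_eq_zero_of_lt (show k < a+1 from by omega),
        Nat.choose_eq_zero_of_lt (show k-1 < a from by omega)]
    simp

private lemma sumF (n k : ℕ) (hkn : k ≤ n) :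
    ∑ i ∈ Finset.range (n/2+1), (n-k).choose i * k.choose i = n.choose k := by
  have step1 : ∑ i ∈ Finset.range (k+1), k.choose i * (n-k).choose (k-i) = n.choose k := by
    rw [vandN, show k + (n-k) = n from by omega]
  have step2 : ∑ i ∈ Finset.range (k+1), k.choose i * (n-k).choose (k-i)
      = ∑ i ∈ Finset.range (k+1), (n-k).choose i * k.choose i := by
    rw [← Finset.sum_range_reflect]
    refine Finset.sum_congr rfl fun i hi => ?_
    have hik : i ≤ k := by simpa [Nat.lt_succ_iff] using hi
    rw [show k+1-1-i = k - i from by omega, show k - (k - i) = i from by omega,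
        Nat.choose_symm hik, mul_comm]
  have pad1 : ∑ i ∈ Finset.range (n/2+1), (n-k).choose i * k.choose i
      = ∑ i ∈ Finset.range (n+1), (n-k).choose i * k.choose i := by
    refine Finset.sum_subset (Finset.range_subset_range.2 (by omega)) fun x hx hnx => ?_
    simp only [Finset.mem_range] at hx hnx
    by_cases hxk : x ≤ k
    · rw [Nat.choose_eq_zero_of_lt (show n - k < x from by omega), zero_mul]
    · rw [Nat.choose_eq_zero_of_lt (show k < x from by omega), mul_zero]
  have pad2 : ∑ i ∈ Finset.range (k+1), (n-k).choose i * k.choose i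
      = ∑ i ∈ Finset.range (n+1), (n-k).choose i * k.choose i := by
    refine Finset.sum_subset (Finset.range_subset_range.2 (by omega)) fun x hx hnx => ?_
    simp only [Finset.mem_range] at hx hnx
    rw [Nat.choose_eq_zero_of_lt (show k < x from by omega), mul_zero]
  rw [pad1, ← pad2, ← step2, step1]

private lemma sumG (n k : ℕ) (hk1 : 1 ≤ k) (hkn : k ≤ n) :
    ∑ j ∈ Finset.range (n/2), (n-k+1).choose (j+2) * (k-1).choose j = n.choose (k+1) := by
  have step1 : ∑ j ∈ Finset.range (k+2), (k-1).choose j * (n-k+1).choose (k+1-j)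
      = n.choose (k+1) := by
    rw [vandN, show k-1 + (n-k+1) = n from by omega]
  have step2 : ∑ j ∈ Finset.range (k+2), (k-1).choose j * (n-k+1).choose (k+1-j)
      = ∑ j ∈ Finset.range (k+2), (k-1).choose (k+1-j) * (n-k+1).choose j := by
    rw [← Finset.sum_range_reflect]
    refine Finset.sum_congr rfl fun j hj => ?_
    have hjk : j ≤ k+1 := by simpa [Nat.lt_succ_iff] using hj
    rw [show k+2-1-j = k+1-j from by omega, show k + 1 - (k + 1 - j) = j from by omega]
  have step3 : ∑ j ∈ Finset.range (k+2), (k-1).choose (k+1-j) * (n-k+1).choose j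
      = ∑ m ∈ Finset.range k, (k-1).choose (k-1-m) * (n-k+1).choose (m+2) := by
    rw [Finset.sum_range_succ' (fun j => (k-1).choose (k+1-j) * (n-k+1).choose j) (k+1),
        Finset.sum_range_succ' (fun j => (k-1).choose (k+1-(j+1)) * (n-k+1).choose (j+1)) k]
    rw [Nat.choose_eq_zero_of_lt (show k-1 < k+1-0 from by omega),
        Nat.choose_eq_zero_of_lt (show k-1 < k+1-(0+1) from by omega)]
    simp only [zero_mul, add_zero]
    refine Finset.sum_congr rfl fun m hm => ?_
    rw [show k+1-(m+1+1) = k-1-m from by omega]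
  have step4 : ∑ m ∈ Finset.range k, (k-1).choose (k-1-m) * (n-k+1).choose (m+2)
      = ∑ m ∈ Finset.range k, (n-k+1).choose (m+2) * (k-1).choose m := by
    refine Finset.sum_congr rfl fun m hm => ?_
    simp only [Finset.mem_range] at hm
    rw [Nat.choose_symm (show m ≤ k-1 from by omega), mul_comm]
  have pad1 : ∑ m ∈ Finset.range k, (n-k+1).choose (m+2) * (k-1).choose m
      = ∑ m ∈ Finset.range n, (n-k+1).choose (m+2) * (k-1).choose m := by
    refine Finset.sum_subset (Finset.range_subset_range.2 (by omega)) fun x hx hnx => ?_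
    simp only [Finset.mem_range] at hx hnx
    rw [Nat.choose_eq_zero_of_lt (show k-1 < x from by omega), mul_zero]
  have pad2 : ∑ m ∈ Finset.range (n/2), (n-k+1).choose (m+2) * (k-1).choose m
      = ∑ m ∈ Finset.range n, (n-k+1).choose (m+2) * (k-1).choose m := by
    refine Finset.sum_subset (Finset.range_subset_range.2 (by omega)) fun x hx hnx => ?_
    simp only [Finset.mem_range] at hx hnx
    by_cases hxk : x ≤ k-1
    · rw [Nat.choose_eq_zero_of_lt (show n-k+1 < x+2 from by omega), zero_mul]
    · rw [Nat.choose_eq_zero_of_lt (show k-1 < x from by omega), mul_zero]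
  rw [pad2, ← pad1, ← step4, ← step3, ← step2, step1]

private lemma det (n k : ℕ) (hk1 : 1 ≤ k) (hkn : k ≤ n) :
    (n.choose k : ℝ) * ((n+1).choose k : ℝ) / ((k:ℝ)+1)
    = (n.choose k : ℝ) * (n.choose k : ℝ) - (n.choose (k-1) : ℝ) * (n.choose (k+1) : ℝ) := by
  rcases eq_or_lt_of_le hkn with rfl | h
  · rw [Nat.choose_eq_zero_of_lt (show k < k+1 from by omega), Nat.choose_self,
        Nat.choose_succ_self_right]
    have : (k:ℝ)+1 ≠ 0 := by positivity
    push_cast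
    field_simp
    ring
  · obtain ⟨a, rfl⟩ : ∃ a, k = a+1 := ⟨k-1, by omega⟩
    obtain ⟨c, rfl⟩ : ∃ c, n = a+c+2 := ⟨n-(a+1)-1, by omega⟩
    rw [show a+1-1 = a from rfl,
        Nat.cast_choose ℝ (show a+1 ≤ a+c+2 from by omega),
        Nat.cast_choose ℝ (show a+1 ≤ a+c+2+1 from by omega),
        Nat.cast_choose ℝ (show a ≤ a+c+2 from by omega),
        Nat.cast_choose ℝ (show a+1+1 ≤ a+c+2 from by omega),
        show a+c+2 - (a+1) = c+1 from by omega,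
        show a+c+2+1 - (a+1) = c+2 from by omega,
        show a+c+2 - a = c+2 from by omega,
        show a+c+2 - (a+1+1) = c from by omega,
        show a+c+2+1 = (a+c+2)+1 from rfl,
        Nat.factorial_succ (a+c+2),
        show (a+1+1) = (a+1)+1 from rfl,
        Nat.factorial_succ (a+1),
        Nat.factorial_succ a,
        show (c+2) = (c+1)+1 from rfl,
        Nat.factorial_succ (c+1),
        Nat.factorial_succ c]
    have h1 := factR_ne a
    have h2 := factR_ne c
    have h3 := factR_ne (a+c+2)
    push_cast
    field_simp
    ring

private lemma mainsum (n k : ℕ) (hk1 : 1 ≤ k) (hkn : k ≤ n) :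
    ∑ i ∈ Finset.range (n/2+1),
        (if i ≤ k then
          (n.factorial : ℝ) / ((i.factorial : ℝ) * (i.factorial : ℝ) *
              ((n - 2*i).factorial : ℝ) * ((i : ℝ) + 1)) * ((n - 2*i).choose (k - i) : ℝ)
        else 0)
    = (n.choose k : ℝ) * ((n+1).choose k : ℝ) / ((k:ℝ)+1) := by
  rw [Finset.sum_range_succ']
  have f0 : (if 0 ≤ k then
        (n.factorial : ℝ) / (((0:ℕ).factorial : ℝ) * ((0:ℕ).factorial : ℝ) *
            ((n - 2*0).factorial : ℝ) * (((0:ℕ) : ℝ) + 1)) * ((n - 2*0).choose (k - 0) : ℝ)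
      else 0) = (n.choose k : ℝ) * ((n-k).choose 0 : ℝ) * (k.choose 0 : ℝ) := by
    rw [if_pos (Nat.zero_le k)]
    simp only [Nat.factorial_zero, Nat.mul_zero, Nat.sub_zero, Nat.cast_zero,
      Nat.cast_one, Nat.choose_zero_right]
    rw [div_eq_one_iff_eq (by
      simpa using mul_ne_zero (mul_ne_zero (mul_ne_zero one_ne_zero one_ne_zero)
        (factR_ne n)) one_ne_zero) |>.2 (by ring) ]
    ring
  have hterm : ∑ a ∈ Finset.range (n/2),
      (if a+1 ≤ k then
        (n.factorial : ℝ) / (((a+1:ℕ).factorial : ℝ) * ((a+1:ℕ).factorial : ℝ) *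
            ((n - 2*(a+1)).factorial : ℝ) * (((a+1:ℕ) : ℝ) + 1)) *
          ((n - 2*(a+1)).choose (k - (a+1)) : ℝ)
      else 0)
      = ∑ a ∈ Finset.range (n/2),
        ((n.choose k : ℝ) * ((n-k).choose (a+1) : ℝ) * (k.choose (a+1) : ℝ)
          - (n.choose (k-1) : ℝ) * ((n-k+1).choose (a+2) : ℝ) * ((k-1).choose a : ℝ)) := by
    refine Finset.sum_congr rfl fun a ha => ?_
    have h2 : 2*(a+1) ≤ n := by
      simp only [Finset.mem_range] at ha; omega
    rw [show (((a+1:ℕ)) : ℝ) = (a:ℝ)+1 from by push_cast; ring]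
    exact term_eq n k a hk1 hkn h2
  rw [hterm, Finset.sum_sub_distrib, f0]
  have hF : (∑ a ∈ Finset.range (n/2),
        (n.choose k : ℝ) * ((n-k).choose (a+1) : ℝ) * (k.choose (a+1) : ℝ))
      + (n.choose k : ℝ) * ((n-k).choose 0 : ℝ) * (k.choose 0 : ℝ)
      = (n.choose k : ℝ) * (n.choose k : ℝ) := by
    rw [← Finset.sum_range_succ'
      (fun i => (n.choose k : ℝ) * ((n-k).choose i : ℝ) * (k.choose i : ℝ)) (n/2)]
    have : ∑ i ∈ Finset.range (n/2+1),
        (n.choose k : ℝ) * ((n-k).choose i : ℝ) * (k.choose i : ℝ)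
        = (n.choose k : ℝ) *
          ((∑ i ∈ Finset.range (n/2+1), (n-k).choose i * k.choose i : ℕ) : ℝ) := by
      rw [Nat.cast_sum, Finset.mul_sum]
      exact Finset.sum_congr rfl fun i _ => by push_cast; ring
    rw [this, sumF n k hkn]
  have hG : (∑ a ∈ Finset.range (n/2),
        (n.choose (k-1) : ℝ) * ((n-k+1).choose (a+2) : ℝ) * ((k-1).choose a : ℝ))
      = (n.choose (k-1) : ℝ) * (n.choose (k+1) : ℝ) := by
    have : ∑ a ∈ Finset.range (n/2),
        (n.choose (k-1) : ℝ) * ((n-k+1).choose (a+2) : ℝ) * ((k-1).choose a : ℝ)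
        = (n.choose (k-1) : ℝ) *
          ((∑ a ∈ Finset.range (n/2), (n-k+1).choose (a+2) * (k-1).choose a : ℕ) : ℝ) := by
      rw [Nat.cast_sum, Finset.mul_sum]
      exact Finset.sum_congr rfl fun a _ => by push_cast; ring
    rw [this, sumG n k hk1 hkn]
  rw [det n k hk1 hkn]
  linarith [hF, hG]

theorem narayana_A_gamma_positive (n : ℕ) :
    ∑ i ∈ Finset.range (n + 1),
        Polynomial.C ((n.choose i : ℝ) * ((n + 1).choose i : ℝ) / ((i : ℝ) + 1)) *
          Polynomial.X ^ i =
      ∑ i ∈ Finset.range (n / 2 + 1),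
        Polynomial.C ((n.factorial : ℝ) /
            ((i.factorial : ℝ) * (i.factorial : ℝ) * ((n - 2 * i).factorial : ℝ) *
              ((i : ℝ) + 1))) *
          Polynomial.X ^ i * (1 + Polynomial.X) ^ (n - 2 * i) := by
  refine Polynomial.ext fun k => ?_
  rw [Polynomial.finset_sum_coeff, Polynomial.finset_sum_coeff]
  simp only [Polynomial.coeff_C_mul, Polynomial.coeff_X_pow, mul_ite, mul_one, mul_zero,
    coeff_term]
  rw [Finset.sum_ite_eq (Finset.range (n+1)) k]
  by_cases hkn : k ≤ n
  · rw [if_pos (Finset.mem_range.2 (by omega))]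
    rcases Nat.eq_zero_or_pos k with rfl | hk1
    · rw [Finset.sum_eq_single_of_mem 0 (Finset.mem_range.2 (by omega))
        (fun i _ hne => if_neg (by omega))]
      rw [if_pos (le_refl 0)]
      simp [Nat.factorial_zero, div_self (factR_ne n)]
    · exact (mainsum n k hk1 hkn).symm
  · rw [if_neg (fun hmem => hkn (by simpa [Nat.lt_succ_iff] using Finset.mem_range.1 hmem))]
    symm
    apply Finset.sum_eq_zero
    intro i hi
    simp only [Finset.mem_range] at hi
    by_cases hik : i ≤ k
    · rw [if_pos hik, Nat.choose_eq_zero_of_lt (show n - 2*i < k - i from by omega)]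
      simp
    · exact if_neg hik
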